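/- Let D be a family of dense subsets of a space X and M = ⋃{V ∩ D_V : V ∈ V} a partial D-mosaic (V a disjoint family of nonempty open sets, D_V ∈ D). If each D_V, as a subspace, is μ-resolvable, then M is μ-resolvable. -/
import Mathlib


open Cardinal Set

universe u

variable {X : Type u} [TopologicalSpace X]

/-- The subspace `A` is `μ`-resolvable: `A` contains `μ` pairwise disjoint subsets,
each dense in `A`. -/
def ResolvCard (μ : Cardinal.{u}) (A : Set X) : Prop :=
  ∃ 𝒮 : Set (Set X), #↥𝒮 = μ ∧ 𝒮.PairwiseDisjoint id ∧
    ∀ T ∈ 𝒮, T ⊆ A ∧ A ⊆ closure T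

/-- If `M = ⋃ {V ∩ D_V : V ∈ 𝒱}` is a partial `𝒟`-mosaic (with `𝒱` a nonempty disjoint
family of nonempty open sets, `D_V ∈ 𝒟`) and each `D_V` is `μ`-resolvable as a
subspace, then so is `M`. -/
theorem stmt_10 (𝒟 : Set (Set X)) (h𝒟 : ∀ D ∈ 𝒟, Dense D) (μ : Cardinal.{u})
    (𝒱 : Set (Set X)) (h𝒱 : ∀ V ∈ 𝒱, IsOpen V ∧ V.Nonempty)
    (hdisj : 𝒱.PairwiseDisjoint id) (h𝒱ne : 𝒱.Nonempty)
    (f : Set X → Set X) (hf : ∀ V ∈ 𝒱, f V ∈ 𝒟)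
    (hres : ∀ V ∈ 𝒱, ResolvCard μ (f V)) :
    ResolvCard μ (⋃ V ∈ 𝒱, V ∩ f V) := by
  classical
  have hres' : ∀ V : ↥𝒱, ∃ 𝒮 : Set (Set X), #↥𝒮 = μ ∧ 𝒮.PairwiseDisjoint id ∧
      ∀ T ∈ 𝒮, T ⊆ f V ∧ f V ⊆ closure T := fun V => hres V V.2
  choose 𝒮 hcard hpd hT using hres'
  have hequiv : ∀ V : ↥𝒱, Nonempty (μ.out ≃ ↥(𝒮 V)) := fun V => by
    rw [← Cardinal.eq, Cardinal.mk_out, hcard]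
  let e : ∀ V : ↥𝒱, μ.out ≃ ↥(𝒮 V) := fun V => (hequiv V).some
  let s : ↥𝒱 → μ.out → Set X := fun V i => ((e V) i : Set X)
  have hsmem : ∀ V i, s V i ∈ 𝒮 V := fun V i => ((e V) i).2
  have hsne : ∀ (V : ↥𝒱) i j, i ≠ j → s V i ≠ s V j := by
    intro V i j hij h
    exact hij ((e V).injective (Subtype.ext h))
  have hsdense : ∀ (V : ↥𝒱) i, Dense (s V i) := by
    intro V i
    have hD : Dense (f V) := h𝒟 _ (hf V V.2)
    have : Dense (closure (s V i)) := hD.mono (hT V _ (hsmem V i)).2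
    rwa [dense_closure] at this
  set g : μ.out → Set X := fun i => ⋃ V : ↥𝒱, (V : Set X) ∩ s V i with hg
  have hgne : ∀ i, (g i).Nonempty := by
    intro i
    obtain ⟨V₀, hV₀⟩ := h𝒱ne
    obtain ⟨x, hx⟩ := (hsdense ⟨V₀, hV₀⟩ i).inter_open_nonempty V₀
      (h𝒱 V₀ hV₀).1 (h𝒱 V₀ hV₀).2
    exact ⟨x, Set.mem_iUnion.2 ⟨⟨V₀, hV₀⟩, hx⟩⟩
  have hgdisj : ∀ i j, i ≠ j → Disjoint (g i) (g j) := by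
    intro i j hij
    rw [Set.disjoint_left]
    intro x hxi hxj
    obtain ⟨V, hxV⟩ := Set.mem_iUnion.1 hxi
    obtain ⟨W, hxW⟩ := Set.mem_iUnion.1 hxj
    have hVW : V = W := by
      by_contra h
      have hne : (V : Set X) ≠ (W : Set X) := fun hc => h (Subtype.ext hc)
      exact (hdisj V.2 W.2 hne).le_bot ⟨hxV.1, hxW.1⟩ |>.elim
    subst hVW
    exact (hpd V (hsmem V i) (hsmem V j) (hsne V i j hij)).le_bot
      ⟨hxV.2, hxW.2⟩ |>.elim
  have hginj : Function.Injective g := by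
    intro i j h
    by_contra hij
    obtain ⟨x, hx⟩ := hgne i
    exact (hgdisj i j hij).le_bot ⟨hx, h ▸ hx⟩
  refine ⟨Set.range g, ?_, ?_, ?_⟩
  · rw [Cardinal.mk_range_eq g hginj, Cardinal.mk_out]
  · rintro T ⟨i, rfl⟩ T' ⟨j, rfl⟩ hne
    exact hgdisj i j (fun h => hne (by rw [h]))
  · rintro T ⟨i, rfl⟩
    constructor
    · apply Set.iUnion_subset
      rintro V
      intro x hx
      exact Set.mem_biUnion V.2 ⟨hx.1, (hT V _ (hsmem V i)).1 hx.2⟩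
    · intro x hx
      rw [Set.mem_iUnion₂] at hx
      obtain ⟨V, hV, hxV, hxf⟩ := hx
      have h1 : x ∈ V ∩ closure (s ⟨V, hV⟩ i) :=
        ⟨hxV, (hT ⟨V, hV⟩ _ (hsmem ⟨V, hV⟩ i)).2 hxf⟩
      have h2 : x ∈ closure (V ∩ s ⟨V, hV⟩ i) := (h𝒱 V hV).1.inter_closure h1
      exact closure_mono (Set.subset_iUnion
        (fun W : ↥𝒱 => (W : Set X) ∩ s W i) ⟨V, hV⟩) h2
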